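/- Let R be a ring and F : (ModuleCat R)ᵒᵖ ⥤ Ab an additive contravariant functor that is half-exact. Let B be an R-module with injective resolution 0 → B → I⁰ → I¹ → ⋯, and for j ≥ 1 let ΣʲB denote the j-th cosyzygy (Σ⁰B = B, ΣʲB = coker(Σʲ⁻¹B ↪ Iʲ⁻¹)), with canonical monomorphisms ΣʲB ↪ Iʲ and epimorphisms Iʲ⁻¹ ↠ ΣʲB. Then the long sequence of abelian groups ⋯ → H₂(F(I^•)) → ker(F(Σ²B) → F(I¹)) → coker(F(I²) → F(Σ²B)) → H₁(F(I^•)) → ker(F(ΣB) → F(I⁰)) → coker(F(I¹) → F(ΣB)) → H₀(F(I^•)) → F(B) → coker(F(I⁰) → F(B)) → 0, where Hⱼ(F(I^•)) is the homology of the chain complex ⋯ → F(I¹) → F(I⁰) at F(Iʲ), the maps F(ΣʲB) → F(Iʲ⁻¹) are induced by the epimorphisms Iʲ⁻¹ ↠ ΣʲB, the maps F(Iʲ) → F(ΣʲB) are induced by the monomorphisms ΣʲB ↪ Iʲ, the map F(I⁰) → F(B) is induced by B ↪ I⁰, and the remaining maps are the canonically induced ones, is exact. -/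

import Mathlib

open CategoryTheory Limits Opposite

set_option linter.unusedSectionVars false

namespace ContraLeftFundamentalSeq

universe u v w

/-- The data of an injective resolution `0 → B → I⁰ → I¹ → ⋯` of the module `B = S 0`
together with its cosyzygies `S j = Σʲ B`, encoded by composable pairs
`Σʲ B →(m j) Iʲ →(e j) Σʲ⁺¹ B` with `m j ≫ e j = 0` (each such pair is required to be a
short exact sequence in the main theorem). -/
structure CosyzygyData (R : Type u) [Ring R] where
  /-- the cosyzygy modules, `S 0` being the given module `B` -/
  S : ℕ → ModuleCat.{v} R
  /-- the modules of the injective resolution -/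
  I : ℕ → ModuleCat.{v} R
  /-- the canonical monomorphisms `Σʲ B ↪ Iʲ` -/
  m : ∀ j, S j ⟶ I j
  /-- the canonical epimorphisms `Iʲ ↠ Σʲ⁺¹ B` -/
  e : ∀ j, I j ⟶ S (j + 1)
  wme : ∀ j, m j ≫ e j = 0

variable {R : Type u} [Ring R]
variable (F : (ModuleCat.{v} R)ᵒᵖ ⥤ AddCommGrpCat.{w}) [F.Additive] (D : CosyzygyData.{u, v} R)

namespace CosyzygyData

/-- The differential `Iʲ ⟶ Iʲ⁺¹` of the injective resolution. -/
def d (j : ℕ) : D.I j ⟶ D.I (j + 1) := D.e j ≫ D.m (j + 1)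

end CosyzygyData

/-- `K j = ker (F(Σʲ⁺¹ B) → F(Iʲ))`, induced by the epimorphism `Iʲ ↠ Σʲ⁺¹ B`. -/
noncomputable def K (j : ℕ) : AddCommGrpCat.{w} := kernel (F.map (D.e j).op)

/-- `Cok j = coker (F(Iʲ) → F(Σʲ B))`, induced by the monomorphism `Σʲ B ↪ Iʲ`
(for `j = 0` this is `coker (F(I⁰) → F(B))`). -/
noncomputable def Cok (j : ℕ) : AddCommGrpCat.{w} := cokernel (F.map (D.m j).op)

/-- The `j`-cycles `Z j = ker (F(Iʲ⁺¹) → F(Iʲ))` of the chain complex `F(I^•)`. -/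
noncomputable def Z (j : ℕ) : AddCommGrpCat.{w} := kernel (F.map (D.d j).op)

/-- The lift `ℓ j : F(Iʲ⁺²) ⟶ Z j` of the chain differential. -/
noncomputable def l (j : ℕ) : F.obj (op (D.I (j + 2))) ⟶ Z F D j :=
  kernel.lift _ (F.map (D.d (j + 1)).op) (by
    rw [← F.map_comp]
    show F.map ((D.e j ≫ (D.m (j + 1) ≫ D.e (j + 1)) ≫ D.m (j + 2)).op) = 0
    rw [D.wme (j + 1), zero_comp, comp_zero]
    exact F.map_zero _ _)

/-- The homology `Hⱼ(F(I^•))` of the chain complex `⋯ → F(I¹) → F(I⁰)` at `F(Iʲ)`: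
`H 0 = coker(F(I¹) → F(I⁰))` and `H (j+1) = Z j / im F(Iʲ⁺²)`. -/
noncomputable def H : ℕ → AddCommGrpCat.{w}
  | 0 => cokernel (F.map (D.d 0).op)
  | (j + 1) => cokernel (l F D j)

/-- The canonical map `F(Σʲ⁺² B) ⟶ Z j` induced by the epimorphism `Iʲ⁺¹ ↠ Σʲ⁺² B`. -/
noncomputable def zmap (j : ℕ) : F.obj (op (D.S (j + 2))) ⟶ Z F D j :=
  kernel.lift _ (F.map (D.e (j + 1)).op) (by
    rw [← F.map_comp]
    show F.map ((D.e j ≫ D.m (j + 1) ≫ D.e (j + 1)).op) = 0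
    rw [D.wme (j + 1), comp_zero]
    exact F.map_zero _ _)

lemma comp_zmap (j : ℕ) : F.map (D.m (j + 2)).op ≫ zmap F D j = l F D j := by
  apply (cancel_mono (kernel.ι (F.map (D.d j).op))).1
  erw [Category.assoc, zmap, kernel.lift_ι, l, kernel.lift_ι, ← F.map_comp]
  rfl

/-- The canonical map `coker(F(Iʲ⁺¹) → F(Σʲ⁺¹ B)) ⟶ Hⱼ(F(I^•))`. -/
noncomputable def toH : ∀ j, Cok F D (j + 1) ⟶ H F D j
  | 0 => cokernel.desc (F.map (D.m 1).op)
      (F.map (D.e 0).op ≫ cokernel.π (F.map (D.d 0).op)) (by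
        erw [← Category.assoc, ← F.map_comp]
        exact cokernel.condition _)
  | (j + 1) => cokernel.desc (F.map (D.m (j + 2)).op)
      (zmap F D j ≫ cokernel.π (l F D j)) (by
        erw [← Category.assoc, comp_zmap, cokernel.condition]; rfl)

/-- The canonical map `H₀(F(I^•)) ⟶ F(B)` induced by the monomorphism `B ↪ I⁰`. -/
noncomputable def fromH0 : H F D 0 ⟶ F.obj (op (D.S 0)) :=
  cokernel.desc (F.map (D.d 0).op) (F.map (D.m 0).op) (by
    rw [← F.map_comp]
    show F.map (((D.m 0 ≫ D.e 0) ≫ D.m 1).op) = 0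
    rw [D.wme 0, zero_comp]
    exact F.map_zero _ _)

/-- The canonical projection `F(B) ⟶ coker(F(I⁰) → F(B))`. -/
noncomputable def π0 : F.obj (op (D.S 0)) ⟶ Cok F D 0 := cokernel.π (F.map (D.m 0).op)

/-- The canonical map `ker(F(Σʲ⁺¹B) → F(Iʲ)) ⟶ coker(F(Iʲ⁺¹) → F(Σʲ⁺¹B))`. -/
noncomputable def fromK (j : ℕ) : K F D j ⟶ Cok F D (j + 1) :=
  kernel.ι (F.map (D.e j).op) ≫ cokernel.π (F.map (D.m (j + 1)).op)

/-- The canonical map `Z j ⟶ K j` induced by the monomorphism `Σʲ⁺¹ B ↪ Iʲ⁺¹`. -/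
noncomputable def toK (j : ℕ) : Z F D j ⟶ K F D j :=
  kernel.lift _ (kernel.ι (F.map (D.d j).op) ≫ F.map (D.m (j + 1)).op) (by
    erw [Category.assoc, ← F.map_comp]
    exact kernel.condition _)

/-- The connecting map `Hⱼ₊₁(F(I^•)) ⟶ ker(F(Σʲ⁺¹B) → F(Iʲ))`. -/
noncomputable def conn (j : ℕ) : H F D (j + 1) ⟶ K F D j :=
  cokernel.desc (l F D j) (toK F D j) (by
    apply (cancel_mono (kernel.ι (F.map (D.e j).op))).1
    erw [Category.assoc, zero_comp]
    show l F D j ≫ toK F D j ≫ kernel.ι _ = 0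
    erw [toK, kernel.lift_ι, ← Category.assoc, l, kernel.lift_ι, ← F.map_comp]
    show F.map (((D.m (j + 1) ≫ D.e (j + 1)) ≫ D.m (j + 2)).op) = 0
    erw [D.wme (j + 1), zero_comp]
    exact F.map_zero _ _)

lemma w₁ : fromH0 F D ≫ π0 F D = 0 := by
  apply (cancel_epi (cokernel.π (F.map (D.d 0).op))).1
  erw [comp_zero, ← Category.assoc, fromH0, cokernel.π_desc, π0, cokernel.condition]; rfl

lemma w₂ : toH F D 0 ≫ fromH0 F D = 0 := by
  apply (cancel_epi (cokernel.π (F.map (D.m 1).op))).1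
  erw [comp_zero, ← Category.assoc, toH, cokernel.π_desc, Category.assoc, fromH0,
    cokernel.π_desc, ← F.map_comp, ← op_comp, D.wme 0]
  exact F.map_zero _ _

lemma w₃ : ∀ j, fromK F D j ≫ toH F D j = 0
  | 0 => by
      erw [fromK, Category.assoc, toH, cokernel.π_desc, ← Category.assoc,
        kernel.condition, zero_comp]
  | (j + 1) => by
      erw [fromK, Category.assoc, toH, cokernel.π_desc, ← Category.assoc]
      have h : kernel.ι (F.map (D.e (j + 1)).op) ≫ zmap F D j = 0 := by
        apply (cancel_mono (kernel.ι (F.map (D.d j).op))).1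
        erw [Category.assoc, zmap, kernel.lift_ι, kernel.condition, zero_comp]
      erw [h, zero_comp]

lemma w₄ (j : ℕ) : conn F D j ≫ fromK F D j = 0 := by
  apply (cancel_epi (cokernel.π (l F D j))).1
  erw [comp_zero, ← Category.assoc, conn, cokernel.π_desc, fromK, ← Category.assoc,
    toK, kernel.lift_ι, Category.assoc, cokernel.condition, comp_zero]

lemma w₅ (j : ℕ) : toH F D (j + 1) ≫ conn F D j = 0 := by
  apply (cancel_epi (cokernel.π (F.map (D.m (j + 2)).op))).1
  erw [comp_zero, ← Category.assoc, toH, cokernel.π_desc, Category.assoc, conn,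
    cokernel.π_desc]
  apply (cancel_mono (kernel.ι (F.map (D.e j).op))).1
  erw [Category.assoc, zero_comp]
  show zmap F D j ≫ toK F D j ≫ kernel.ι _ = 0
  erw [toK, kernel.lift_ι, ← Category.assoc, zmap, kernel.lift_ι, ← F.map_comp, ← op_comp,
    D.wme (j + 1)]
  exact F.map_zero _ _

section Helpers

lemma coker_chase {A B : AddCommGrpCat.{w}} (f : A ⟶ B) (x : B)
    (hx : cokernel.π f x = 0) : ∃ a, f a = x := by
  have h := ShortComplex.exact_of_g_is_cokernel
      (S := ShortComplex.mk f (cokernel.π f) (cokernel.condition f))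
      (cokernelIsCokernel f)
  exact (ShortComplex.ab_exact_iff _).1 h x hx

lemma ker_chase {A B : AddCommGrpCat.{w}} (f : A ⟶ B) (x : A)
    (hx : f x = 0) : ∃ k, kernel.ι f k = x := by
  have h := ShortComplex.exact_of_f_is_kernel
      (S := ShortComplex.mk (kernel.ι f) f (kernel.condition f))
      (kernelIsKernel f)
  exact (ShortComplex.ab_exact_iff _).1 h x hx

lemma coker_surj {A B : AddCommGrpCat.{w}} (f : A ⟶ B) :
    Function.Surjective (cokernel.π f) :=
  (AddCommGrpCat.epi_iff_surjective _).1 inferInstance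

lemma ker_inj {A B : AddCommGrpCat.{w}} (f : A ⟶ B) :
    Function.Injective (kernel.ι f) :=
  (AddCommGrpCat.mono_iff_injective _).1 inferInstance

lemma happ {A B C : AddCommGrpCat.{w}} {f : A ⟶ B} {g : B ⟶ C} {h : A ⟶ C}
    (w : f ≫ g = h) (x : A) : g (f x) = h x := by rw [← w]; rfl

lemma happ₂ {A B B' C : AddCommGrpCat.{w}} {f : A ⟶ B} {g : B ⟶ C} {f' : A ⟶ B'} {g' : B' ⟶ C}
    (w : f ≫ g = f' ≫ g') (x : A) : g (f x) = g' (f' x) :=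
  (happ w x).trans (happ rfl x).symm

lemma zero_app {A B : AddCommGrpCat.{w}} (x : A) : (0 : A ⟶ B) x = 0 := rfl

end Helpers

theorem contra_left_fundamental_sequence_exact'
    (hhalf : ∀ ⦃X Y Z : ModuleCat.{v} R⦄ (f : X ⟶ Y) (g : Y ⟶ Z) (w : f ≫ g = 0),
      (ShortComplex.mk f g w).ShortExact →
      (ShortComplex.mk (F.map g.op) (F.map f.op)
        (by rw [← F.map_comp, ← op_comp, w]; exact F.map_zero _ _)).Exact)
    (hres : ∀ j, (ShortComplex.mk (D.m j) (D.e j) (D.wme j)).ShortExact) :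
    Epi (π0 F D) ∧
    (ShortComplex.mk _ _ (w₁ F D)).Exact ∧
    (ShortComplex.mk _ _ (w₂ F D)).Exact ∧
    (∀ j, (ShortComplex.mk _ _ (w₃ F D j)).Exact) ∧
    (∀ j, (ShortComplex.mk _ _ (w₄ F D j)).Exact) ∧
    (∀ j, (ShortComplex.mk _ _ (w₅ F D j)).Exact) := by
  have half : ∀ j (a : F.obj (op (D.I j))), F.map (D.m j).op a = 0 →
      ∃ b, F.map (D.e j).op b = a := fun j a ha =>
    (ShortComplex.ab_exact_iff _).1 (hhalf (D.m j) (D.e j) (D.wme j) (hres j)) a ha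
  have hme : ∀ j, F.map (D.m (j + 1)).op ≫ F.map (D.e j).op = F.map (D.d j).op := by
    intro j
    rw [← F.map_comp, ← op_comp]
    rfl
  have hd : ∀ j (c : F.obj (op (D.I (j + 1)))),
      F.map (D.d j).op c = F.map (D.e j).op (F.map (D.m (j + 1)).op c) :=
    fun j c => (happ (hme j) c).symm
  have hfromH0 : cokernel.π (F.map (D.d 0).op) ≫ fromH0 F D = F.map (D.m 0).op := by
    rw [fromH0]; exact cokernel.π_desc _ _ _
  have htoH0 : cokernel.π (F.map (D.m 1).op) ≫ toH F D 0 =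
      F.map (D.e 0).op ≫ cokernel.π (F.map (D.d 0).op) := by
    rw [toH]; exact cokernel.π_desc _ _ _
  have htoH : ∀ j, cokernel.π (F.map (D.m (j + 2)).op) ≫ toH F D (j + 1) =
      zmap F D j ≫ cokernel.π (l F D j) := by
    intro j; rw [toH]; exact cokernel.π_desc _ _ _
  have hconn : ∀ j, cokernel.π (l F D j) ≫ conn F D j = toK F D j := by
    intro j; rw [conn]; exact cokernel.π_desc _ _ _
  have htoK : ∀ j, toK F D j ≫ kernel.ι (F.map (D.e j).op) =
      kernel.ι (F.map (D.d j).op) ≫ F.map (D.m (j + 1)).op := by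
    intro j; rw [toK]; exact kernel.lift_ι _ _ _
  have hzι : ∀ j, zmap F D j ≫ kernel.ι (F.map (D.d j).op) = F.map (D.e (j + 1)).op := by
    intro j; rw [zmap]; exact kernel.lift_ι _ _ _
  refine ⟨inferInstanceAs (Epi (cokernel.π _)), ?_, ?_, ?_, ?_, ?_⟩
  · -- exact at F(B)
    rw [ShortComplex.ab_exact_iff]
    intro x hx
    obtain ⟨a, ha⟩ := coker_chase (F.map (D.m 0).op) x hx
    exact ⟨cokernel.π (F.map (D.d 0).op) a, (happ hfromH0 a).trans ha⟩
  · -- exact at H0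
    rw [ShortComplex.ab_exact_iff]
    intro x hx
    obtain ⟨a, ha⟩ := coker_surj (F.map (D.d 0).op) x
    have hπ : fromH0 F D (cokernel.π (F.map (D.d 0).op) a) = F.map (D.m 0).op a :=
      happ hfromH0 a
    have ha0 : F.map (D.m 0).op a = 0 := by
      rw [← hπ, ha]; exact hx
    obtain ⟨b, hb⟩ := half 0 a ha0
    refine ⟨cokernel.π (F.map (D.m 1).op) b, ?_⟩
    have h : toH F D 0 (cokernel.π (F.map (D.m 1).op) b)
        = cokernel.π (F.map (D.d 0).op) (F.map (D.e 0).op b) := happ₂ htoH0 b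
    exact h.trans ((congrArg (fun t => cokernel.π (F.map (D.d 0).op) t) hb).trans ha)
  · -- exact at Cok (j+1)
    rintro (_ | j) <;> rw [ShortComplex.ab_exact_iff]
    · intro x hx
      obtain ⟨b, hb⟩ := coker_surj (F.map (D.m 1).op) x
      have h : toH F D 0 (cokernel.π (F.map (D.m 1).op) b)
          = cokernel.π (F.map (D.d 0).op) (F.map (D.e 0).op b) := happ₂ htoH0 b
      have hx0 : cokernel.π (F.map (D.d 0).op) (F.map (D.e 0).op b) = 0 := by
        rw [← h, hb]; exact hx
      obtain ⟨c, hc⟩ := coker_chase _ _ hx0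
      have hker : F.map (D.e 0).op (b - F.map (D.m 1).op c) = 0 := by
        rw [map_sub, ← hd 0 c, hc, sub_self]
      obtain ⟨k, hk⟩ := ker_chase _ _ hker
      refine ⟨k, ?_⟩
      have h0 : cokernel.π (F.map (D.m 1).op) (F.map (D.m 1).op c) = 0 :=
        (happ (cokernel.condition (F.map (D.m 1).op)) c).trans (zero_app _)
      show cokernel.π (F.map (D.m 1).op) (kernel.ι (F.map (D.e 0).op) k) = x
      rw [hk, map_sub, h0, sub_zero, hb]
    · intro x hx
      obtain ⟨b, hb⟩ := coker_surj (F.map (D.m (j + 2)).op) x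
      have h : toH F D (j + 1) (cokernel.π (F.map (D.m (j + 2)).op) b)
          = cokernel.π (l F D j) (zmap F D j b) := happ₂ (htoH j) b
      have hx0 : cokernel.π (l F D j) (zmap F D j b) = 0 := by
        rw [← h, hb]; exact hx
      obtain ⟨c, hc⟩ := coker_chase _ _ hx0
      have hz1 : zmap F D j (F.map (D.m (j + 2)).op c) = l F D j c :=
        happ (comp_zmap F D j) c
      have hz2 : zmap F D j (b - F.map (D.m (j + 2)).op c) = 0 := by
        rw [map_sub, hz1, hc, sub_self]
      have hker : F.map (D.e (j + 1)).op (b - F.map (D.m (j + 2)).op c) = 0 := by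
        rw [← happ (hzι j) (b - F.map (D.m (j + 2)).op c), hz2, map_zero]
      obtain ⟨k, hk⟩ := ker_chase _ _ hker
      refine ⟨k, ?_⟩
      have h0 : cokernel.π (F.map (D.m (j + 2)).op) (F.map (D.m (j + 2)).op c) = 0 :=
        (happ (cokernel.condition (F.map (D.m (j + 2)).op)) c).trans (zero_app _)
      show cokernel.π (F.map (D.m (j + 2)).op) (kernel.ι (F.map (D.e (j + 1)).op) k) = x
      rw [hk, map_sub, h0, sub_zero, hb]
  · -- exact at K j
    intro j
    rw [ShortComplex.ab_exact_iff]
    intro k hk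
    have hk' : cokernel.π (F.map (D.m (j + 1)).op) (kernel.ι (F.map (D.e j).op) k) = 0 := hk
    obtain ⟨a, ha⟩ := coker_chase _ _ hk'
    have hda : F.map (D.d j).op a = 0 := by
      rw [hd j a, ha]
      exact (happ (kernel.condition (F.map (D.e j).op)) k).trans (zero_app _)
    obtain ⟨z, hz⟩ := ker_chase _ _ hda
    refine ⟨cokernel.π (l F D j) z, ?_⟩
    have hcz : conn F D j (cokernel.π (l F D j) z) = toK F D j z := happ (hconn j) z
    have hι : kernel.ι (F.map (D.e j).op) (toK F D j z)
        = F.map (D.m (j + 1)).op (kernel.ι (F.map (D.d j).op) z) := happ₂ (htoK j) z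
    refine hcz.trans (ker_inj (F.map (D.e j).op) ?_)
    rw [hι, hz, ha]
  · -- exact at H (j+1)
    intro j
    rw [ShortComplex.ab_exact_iff]
    intro x hx
    obtain ⟨z, hz⟩ := coker_surj (l F D j) x
    have hcz : conn F D j (cokernel.π (l F D j) z) = toK F D j z := happ (hconn j) z
    have htk0 : toK F D j z = 0 := by
      rw [← hcz, hz]; exact hx
    have hι : kernel.ι (F.map (D.e j).op) (toK F D j z)
        = F.map (D.m (j + 1)).op (kernel.ι (F.map (D.d j).op) z) := happ₂ (htoK j) z
    have hmz : F.map (D.m (j + 1)).op (kernel.ι (F.map (D.d j).op) z) = 0 := by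
      rw [← hι, htk0]; exact map_zero _
    obtain ⟨b, hb⟩ := half (j + 1) _ hmz
    refine ⟨cokernel.π (F.map (D.m (j + 2)).op) b, ?_⟩
    have hth : toH F D (j + 1) (cokernel.π (F.map (D.m (j + 2)).op) b)
        = cokernel.π (l F D j) (zmap F D j b) := happ₂ (htoH j) b
    have hzb : zmap F D j b = z :=
      ker_inj (F.map (D.d j).op) ((happ (hzι j) b).trans hb)
    exact hth.trans ((congrArg (fun t => cokernel.π (l F D j) t) hzb).trans hz)

/-- **The left fundamental sequence of a half-exact contravariant functor (computed with an
injective resolution) is exact.**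
Let `F` be an additive half-exact contravariant functor from `R`-modules to abelian groups
and `0 → B → I⁰ → I¹ → ⋯` an injective resolution of `B = S 0` with cosyzygies `Σʲ B = S j`.
Then the long sequence
`⋯ → H₂(F(I^•)) → ker(F(Σ²B) → F(I¹)) → coker(F(I²) → F(Σ²B)) → H₁(F(I^•)) →`
`ker(F(ΣB) → F(I⁰)) → coker(F(I¹) → F(ΣB)) → H₀(F(I^•)) → F(B) → coker(F(I⁰) → F(B)) → 0`,
with all maps the canonically induced ones, is exact. -/
theorem contra_left_fundamental_sequence_exact
    (hhalf : ∀ ⦃X Y Z : ModuleCat.{v} R⦄ (f : X ⟶ Y) (g : Y ⟶ Z) (w : f ≫ g = 0),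
      (ShortComplex.mk f g w).ShortExact →
      (ShortComplex.mk (F.map g.op) (F.map f.op)
        (by rw [← F.map_comp, ← op_comp, w]; exact F.map_zero _ _)).Exact)
    (hinj : ∀ j, Injective (D.I j))
    (hres : ∀ j, (ShortComplex.mk (D.m j) (D.e j) (D.wme j)).ShortExact) :
    Epi (π0 F D) ∧
    (ShortComplex.mk _ _ (w₁ F D)).Exact ∧
    (ShortComplex.mk _ _ (w₂ F D)).Exact ∧
    (∀ j, (ShortComplex.mk _ _ (w₃ F D j)).Exact) ∧
    (∀ j, (ShortComplex.mk _ _ (w₄ F D j)).Exact) ∧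
    (∀ j, (ShortComplex.mk _ _ (w₅ F D j)).Exact) :=
  contra_left_fundamental_sequence_exact' F D hhalf hres

end ContraLeftFundamentalSeq
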